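/- For any two quantum states ω and τ (density operators on a finite-dimensional Hilbert space), D_max(ω‖τ) ≥ D_min(ω‖τ), i.e., inf{λ : ω ≤ 2^λ τ} ≥ −log₂ F(ω,τ). -/

import Mathlib

open Matrix Kronecker BigOperators ComplexOrder

/-- The positive semidefinite square root of a positive semidefinite matrix
(the definition `Matrix.PosSemidef.sqrt` of the older Mathlib, since removed). -/
noncomputable def Matrix.PosSemidef.sqrt {n : Type*} [Fintype n] [DecidableEq n]
    {𝕜 : Type*} [RCLike 𝕜] {A : Matrix n n 𝕜} (hA : A.PosSemidef) : Matrix n n 𝕜 :=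
  hA.1.eigenvectorUnitary.1 * diagonal ((↑) ∘ (√·) ∘ hA.1.eigenvalues) *
    (star hA.1.eigenvectorUnitary : Matrix n n 𝕜)

noncomputable def traceNorm {n : Type*} [Fintype n] [DecidableEq n] (A : Matrix n n ℂ) : ℝ :=
  ((Matrix.posSemidef_conjTranspose_mul_self A).sqrt).trace.re

noncomputable def vNEntropy {n : Type*} [Fintype n] [DecidableEq n] (M : Matrix n n ℂ) : ℝ :=
  if h : M.IsHermitian then -∑ i, (h.eigenvalues i) * Real.logb 2 (h.eigenvalues i) else 0

open scoped Classical in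
noncomputable def fidelity {n : Type*} [Fintype n] [DecidableEq n] (A B : Matrix n n ℂ) : ℝ :=
  if h : A.PosSemidef ∧ B.PosSemidef then (traceNorm (h.1.sqrt * h.2.sqrt))^2 else 0

noncomputable def Dmin {n : Type*} [Fintype n] [DecidableEq n] (A B : Matrix n n ℂ) : ℝ :=
  - Real.logb 2 (fidelity A B)

noncomputable def Dmax {n : Type*} [Fintype n] [DecidableEq n] (A B : Matrix n n ℂ) : EReal :=
  ⨅ l ∈ {l : ℝ | ((((2:ℝ)^l : ℝ) : ℂ) • B - A).PosSemidef}, (l : EReal)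

noncomputable def traceSnd {x y : Type*} [Fintype y] (M : Matrix (x × y) (x × y) ℂ) :
    Matrix x x ℂ := Matrix.of fun i j => ∑ k, M (i,k) (j,k)

noncomputable def traceFst {x y : Type*} [Fintype x] (M : Matrix (x × y) (x × y) ℂ) :
    Matrix y y ℂ := Matrix.of fun i j => ∑ k, M (k,i) (k,j)

noncomputable def mutInfo {x y : Type*} [Fintype x] [Fintype y] [DecidableEq x] [DecidableEq y]
    (M : Matrix (x × y) (x × y) ℂ) : ℝ :=
  vNEntropy (traceSnd M) + vNEntropy (traceFst M) - vNEntropy M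

def blockApply {r a b : Type*} (Φ : Matrix a a ℂ →ₗ[ℂ] Matrix b b ℂ)
    (M : Matrix (r × a) (r × a) ℂ) : Matrix (r × b) (r × b) ℂ :=
  Matrix.of fun x y => Φ (Matrix.of fun s t => M (x.1, s) (y.1, t)) x.2 y.2

structure QChannel (a b : Type*) [Fintype a] [DecidableEq a] [Fintype b] [DecidableEq b] where
  map : Matrix a a ℂ →ₗ[ℂ] Matrix b b ℂ
  trace_preserving : ∀ M : Matrix a a ℂ, (map M).trace = M.trace
  completely_pos : ∀ (n : ℕ) (M : Matrix (Fin n × a) (Fin n × a) ℂ),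
    M.PosSemidef → (blockApply map M).PosSemidef

noncomputable def IRB {r b e : Type*} [Fintype r] [Fintype b] [Fintype e]
    [DecidableEq r] [DecidableEq b] [DecidableEq e]
    (ω : Matrix (r × (b × e)) (r × (b × e)) ℂ) : ℝ :=
  mutInfo (Matrix.of fun (p q : r × b) => ∑ y : e, ω (p.1, (p.2, y)) (q.1, (q.2, y)))

noncomputable def IRE {r b e : Type*} [Fintype r] [Fintype b] [Fintype e]
    [DecidableEq r] [DecidableEq b] [DecidableEq e]
    (ω : Matrix (r × (b × e)) (r × (b × e)) ℂ) : ℝ :=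
  mutInfo (Matrix.of fun (p q : r × e) => ∑ x : b, ω (p.1, (x, p.2)) (q.1, (x, q.2)))



section aux
set_option linter.unusedSectionVars false
variable {n : Type*} [Fintype n] [DecidableEq n]

open scoped MatrixOrder in
lemma Matrix.PosSemidef.sqrt_eq_cfcSqrt {A : Matrix n n ℂ} (hA : A.PosSemidef) :
    hA.sqrt = CFC.sqrt A := by
  rw [CFC.sqrt_eq_real_sqrt A hA.nonneg, cfcₙ_eq_cfc (hf0 := Real.sqrt_zero), hA.1.cfc_eq,
    IsHermitian.cfc, Unitary.conjStarAlgAut_apply]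
  rfl

open scoped MatrixOrder in
lemma Matrix.PosSemidef.sqrt_mul_self {A : Matrix n n ℂ} (hA : A.PosSemidef) :
    hA.sqrt * hA.sqrt = A := by
  rw [hA.sqrt_eq_cfcSqrt]
  exact CFC.sqrt_mul_sqrt_self A hA.nonneg

open scoped MatrixOrder in
lemma Matrix.PosSemidef.posSemidef_sqrt {A : Matrix n n ℂ} (hA : A.PosSemidef) :
    hA.sqrt.PosSemidef := by
  rw [hA.sqrt_eq_cfcSqrt]
  exact (CFC.sqrt_nonneg A).posSemidef

open scoped MatrixOrder in
lemma Matrix.PosSemidef.eq_sqrt_of_sq_eq {A B : Matrix n n ℂ} (hA : A.PosSemidef)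
    (hB : B.PosSemidef) (h : A ^ 2 = B) : A = hB.sqrt := by
  rw [hB.sqrt_eq_cfcSqrt]
  exact (CFC.sqrt_unique (by rw [← sq]; exact h) hA.nonneg).symm

lemma smul_posSemidef {A : Matrix n n ℂ} (hA : A.PosSemidef) {c : ℝ} (hc : 0 ≤ c) :
    ((c : ℂ) • A).PosSemidef := by
  refine Matrix.PosSemidef.of_dotProduct_mulVec_nonneg ?_ ?_
  · unfold Matrix.IsHermitian
    rw [conjTranspose_smul, hA.1]
    congr 1
    simp
  · intro x
    rw [smul_mulVec, dotProduct_smul, smul_eq_mul]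
    exact mul_nonneg (by exact_mod_cast hc) (hA.dotProduct_mulVec_nonneg x)

lemma diag_nonneg {A : Matrix n n ℂ} (hA : A.PosSemidef) (i : n) : 0 ≤ A i i := by
  have := hA.dotProduct_mulVec_nonneg (Pi.single i 1)
  simpa [mulVec_single, dotProduct, Pi.single_apply, Finset.sum_ite_eq'] using this

lemma trace_nonneg_of_psd {A : Matrix n n ℂ} (hA : A.PosSemidef) : 0 ≤ A.trace := by
  rw [Matrix.trace]
  exact Finset.sum_nonneg fun i _ => diag_nonneg hA i

lemma trace_mul_nonneg {A B : Matrix n n ℂ} (hA : A.PosSemidef) (hB : B.PosSemidef) :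
    0 ≤ (A * B).trace := by
  have h1 : (hA.sqrt * B * hA.sqrt).trace = (A * B).trace := by
    rw [Matrix.trace_mul_cycle, hA.sqrt_mul_self]
  rw [← h1]
  have h2 : (hA.sqrt * B * hA.sqrt).PosSemidef := by
    have := hB.conjTranspose_mul_mul_same hA.sqrt
    rwa [hA.posSemidef_sqrt.1] at this
  exact trace_nonneg_of_psd h2

lemma sqrt_mono {A B : Matrix n n ℂ} (hA : A.PosSemidef) (hB : B.PosSemidef)
    (hAB : (B - A).PosSemidef) : (hB.sqrt - hA.sqrt).PosSemidef := by
  set S := hB.sqrt with hSdef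
  set T := hA.sqrt with hTdef
  have hS := hB.posSemidef_sqrt
  have hT := hA.posSemidef_sqrt
  have hC : (S - T).IsHermitian := hS.1.sub hT.1
  refine hC.posSemidef_iff_eigenvalues_nonneg.mpr (show ∀ i, 0 ≤ hC.eigenvalues i from ?_)
  intro i
  set μ := hC.eigenvalues i with hμdef
  set v := ⇑(hC.eigenvectorBasis i) with hvdef
  have hv : (S - T) *ᵥ v = (μ : ℂ) • v := by
    rw [hC.mulVec_eigenvectorBasis i]
    ext j
    simp only [Pi.smul_apply, Complex.real_smul, smul_eq_mul]
    rfl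
  have hvne : v ≠ 0 := by
    intro h
    exact hC.eigenvectorBasis.orthonormal.ne_zero i (by ext j; exact congrFun h j)
  set p := star v ⬝ᵥ S *ᵥ v with hpdef
  set q := star v ⬝ᵥ T *ᵥ v with hqdef
  have hp : 0 ≤ p := hS.dotProduct_mulVec_nonneg v
  have hq : 0 ≤ q := hT.dotProduct_mulVec_nonneg v
  have hBA : B - A = S * (S - T) + (S - T) * T := by
    rw [mul_sub, sub_mul, hB.sqrt_mul_self, hA.sqrt_mul_self]
    abel
  have key : 0 ≤ (μ : ℂ) * (p + q) := by
    have h0 := hAB.dotProduct_mulVec_nonneg v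
    rw [hBA, add_mulVec, dotProduct_add] at h0
    have e1 : star v ⬝ᵥ (S * (S - T)) *ᵥ v = (μ : ℂ) * p := by
      rw [← mulVec_mulVec, hv, mulVec_smul, dotProduct_smul, smul_eq_mul]
    have e2 : star v ⬝ᵥ ((S - T) * T) *ᵥ v = (μ : ℂ) * q := by
      conv_lhs => rw [← mulVec_mulVec, dotProduct_mulVec, ← hC, ← star_mulVec, hv]
      rw [star_smul, smul_dotProduct]
      simp [Complex.conj_ofReal]
      left; rfl
    rw [e1, e2, ← mul_add] at h0
    exact h0
  rcases eq_or_lt_of_le (add_nonneg hp hq) with h | h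
  · have hp0 : p = 0 := le_antisymm (by rw [h]; exact le_add_of_nonneg_right hq) hp
    have hq0 : q = 0 := le_antisymm (by rw [h]; exact le_add_of_nonneg_left hp) hq
    have hSv : S *ᵥ v = 0 := (hS.dotProduct_mulVec_zero_iff v).mp hp0
    have hTv : T *ᵥ v = 0 := (hT.dotProduct_mulVec_zero_iff v).mp hq0
    have : (μ : ℂ) • v = 0 := by rw [← hv, sub_mulVec, hSv, hTv, sub_zero]
    rcases smul_eq_zero.mp this with h1 | h1
    · simp only [Complex.ofReal_eq_zero] at h1
      rw [h1]
    · exact absurd h1 hvne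
  · have hre : 0 < (p + q).re := (Complex.lt_def.mp h).1
    have hkey : 0 ≤ μ * (p + q).re := by
      have h2 := (Complex.le_def.mp key).1
      simpa using h2
    nlinarith

lemma trace_sqrt_eq {A : Matrix n n ℂ} (hA : A.PosSemidef) :
    hA.sqrt.trace = ((∑ i, Real.sqrt (hA.1.eigenvalues i) : ℝ) : ℂ) := by
  rw [Matrix.PosSemidef.sqrt, Matrix.trace_mul_cycle]
  rw [Unitary.coe_star_mul_self, one_mul, Matrix.trace_diagonal]
  push_cast
  rfl

lemma re_trace_le_traceNorm (M : Matrix n n ℂ) : M.trace.re ≤ traceNorm M := by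
  have h := Matrix.posSemidef_conjTranspose_mul_self M
  have hH : (Mᴴ * M).IsHermitian := h.1
  set V : Matrix n n ℂ := (hH.eigenvectorUnitary : Matrix n n ℂ) with hVdef
  have hVs : star V * V = 1 := Unitary.coe_star_mul_self hH.eigenvectorUnitary
  have hVm : V * star V = 1 := Unitary.coe_mul_star_self hH.eigenvectorUnitary
  have hRHS : traceNorm M = ∑ i, Real.sqrt (hH.eigenvalues i) := by
    rw [traceNorm, trace_sqrt_eq h, Complex.ofReal_re]
  have hLHS : (star V * M * V).trace = M.trace := by
    rw [Matrix.trace_mul_cycle, hVm, one_mul]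
  rw [hRHS, ← hLHS, Matrix.trace, Complex.re_sum]
  simp only [Matrix.diag_apply]
  apply Finset.sum_le_sum
  intro i _
  have hdiagMV : ∀ (X : Matrix n n ℂ),
      (star X * X) i i = ((∑ j, Complex.normSq (X j i) : ℝ) : ℂ) := by
    intro X
    rw [Matrix.mul_apply]
    push_cast
    refine Finset.sum_congr rfl fun j _ => ?_
    rw [Matrix.star_apply, Complex.star_def, ← Complex.normSq_eq_conj_mul_self]
  have hcol1 : ∑ j, Complex.normSq (V j i) = 1 := by
    have h1 : (star V * V) i i = (1 : Matrix n n ℂ) i i := by rw [hVs]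
    rw [Matrix.one_apply_eq, hdiagMV V] at h1
    exact_mod_cast h1
  have hcol2 : ∑ j, Complex.normSq ((M * V) j i) = hH.eigenvalues i := by
    have hst : star (M * V) * (M * V) = star V * (Mᴴ * M) * V := by
      rw [Matrix.star_mul]
      simp only [Matrix.star_eq_conjTranspose, Matrix.mul_assoc]
    have h2 : (star (M * V) * (M * V)) i i
        = ((hH.eigenvalues i : ℝ) : ℂ) := by
      rw [hst]
      have h3 : star V * (Mᴴ * M) * V = diagonal (RCLike.ofReal ∘ hH.eigenvalues) := by
        have := hH.conjStarAlgAut_star_eigenvectorUnitary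
        rwa [Unitary.conjStarAlgAut_star_apply] at this
      rw [h3, Matrix.diagonal_apply_eq]
      rfl
    rw [hdiagMV] at h2
    exact_mod_cast h2
  -- per index bound
  have hexp : (star V * M * V) i i = ∑ j, (star V) i j * (M * V) j i := by
    rw [Matrix.mul_assoc, Matrix.mul_apply]
  rw [hexp, Complex.re_sum]
  have step1 : ∑ j, ((star V) i j * (M * V) j i).re
      ≤ ∑ j, ‖V j i‖ * ‖(M * V) j i‖ := by
    apply Finset.sum_le_sum
    intro j _
    calc ((star V) i j * (M * V) j i).re
        ≤ ‖(star V) i j * (M * V) j i‖ := Complex.re_le_norm _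
      _ = ‖V j i‖ * ‖(M * V) j i‖ := by
          rw [norm_mul, Matrix.star_apply, Complex.star_def, Complex.norm_conj]
  refine step1.trans ?_
  set a : n → ℝ := fun j => ‖V j i‖
  set b : n → ℝ := fun j => ‖(M * V) j i‖
  have hcs := Finset.sum_mul_sq_le_sq_mul_sq Finset.univ a b
  have ha2 : ∑ j, a j ^ 2 = 1 := by
    rw [← hcol1]; exact Finset.sum_congr rfl fun j _ => Complex.sq_norm _
  have hb2 : ∑ j, b j ^ 2 = hH.eigenvalues i := by
    rw [← hcol2]; exact Finset.sum_congr rfl fun j _ => Complex.sq_norm _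
  rw [ha2, hb2, one_mul] at hcs
  have hab : 0 ≤ ∑ j, a j * b j :=
    Finset.sum_nonneg fun j _ => mul_nonneg (norm_nonneg _) (norm_nonneg _)
  calc ∑ j, a j * b j = Real.sqrt ((∑ j, a j * b j) ^ 2) := (Real.sqrt_sq hab).symm
    _ ≤ Real.sqrt (hH.eigenvalues i) := Real.sqrt_le_sqrt hcs

end aux

/-- The max-relative entropy dominates the min-relative entropy. -/
theorem dmin_le_dmax {n : Type*} [Fintype n] [DecidableEq n]
    (ω τ : Matrix n n ℂ) (hω : ω.PosSemidef) (hω1 : ω.trace = 1)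
    (hτ : τ.PosSemidef) (hτ1 : τ.trace = 1) :
    ((Dmin ω τ : ℝ) : EReal) ≤ Dmax ω τ := by
  rw [Dmax]
  refine le_iInf₂ fun l hl => ?_
  rw [EReal.coe_le_coe_iff]
  -- hl : (((2:ℝ)^l : ℂ) • τ - ω).PosSemidef
  set c : ℝ := (2:ℝ) ^ (l/2) with hcdef
  have hc0 : (0:ℝ) < c := Real.rpow_pos_of_pos (by norm_num) _
  have hc2 : c ^ 2 = (2:ℝ) ^ l := by
    rw [hcdef, ← Real.rpow_natCast ((2:ℝ)^(l/2)) 2, ← Real.rpow_mul (by norm_num : (0:ℝ) ≤ 2)]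
    norm_num
  have hτs : (((((2:ℝ)^l : ℝ)) : ℂ) • τ).PosSemidef :=
    smul_posSemidef hτ (Real.rpow_nonneg (by norm_num) l)
  -- sqrt of the scaled matrix
  have hcsq : ((c:ℂ) • hτ.sqrt).PosSemidef := smul_posSemidef hτ.posSemidef_sqrt hc0.le
  have hsq_eq : (c:ℂ) • hτ.sqrt = hτs.sqrt := by
    apply Matrix.PosSemidef.eq_sqrt_of_sq_eq hcsq hτs
    rw [pow_two, smul_mul_smul_comm, hτ.sqrt_mul_self, ← Complex.ofReal_mul, ← pow_two, hc2]
  have hmono := sqrt_mono hω hτs hl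
  rw [← hsq_eq] at hmono
  -- trace inequality
  have htr := trace_mul_nonneg hω.posSemidef_sqrt hmono
  have htr2 : 0 ≤ (c:ℂ) * (hω.sqrt * hτ.sqrt).trace - 1 := by
    have : hω.sqrt * ((c:ℂ) • hτ.sqrt - hω.sqrt)
        = (c:ℂ) • (hω.sqrt * hτ.sqrt) - ω := by
      rw [mul_sub, Matrix.mul_smul, hω.sqrt_mul_self]
    rw [this, Matrix.trace_sub, Matrix.trace_smul, hω1] at htr
    simpa using htr
  set T := (hω.sqrt * hτ.sqrt).trace with hTdef
  have hTre : 1 / c ≤ T.re := by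
    have h1 := (Complex.le_def.mp htr2).1
    simp only [Complex.sub_re, Complex.mul_re, Complex.ofReal_re, Complex.ofReal_im,
      Complex.one_re, Complex.zero_re, zero_mul, sub_zero] at h1
    rw [div_le_iff₀ hc0]
    nlinarith
  have hc1 : 0 < 1 / c := by positivity
  have htn : 1 / c ≤ traceNorm (hω.sqrt * hτ.sqrt) :=
    hTre.trans (re_trace_le_traceNorm _)
  have hfid : (2:ℝ) ^ (-l) ≤ fidelity ω τ := by
    rw [fidelity, dif_pos (⟨hω, hτ⟩ : ω.PosSemidef ∧ τ.PosSemidef)]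
    have h2 : ((1:ℝ)/c) ^ 2 ≤ (traceNorm (hω.sqrt * hτ.sqrt)) ^ 2 :=
      pow_le_pow_left₀ hc1.le htn 2
    refine le_trans (le_of_eq ?_) h2
    rw [div_pow, one_pow, hc2, Real.rpow_neg (by norm_num : (0:ℝ) ≤ 2), inv_eq_one_div]
  -- conclude
  rw [Dmin, neg_le]
  have hfpos : (0:ℝ) < (2:ℝ) ^ (-l) := Real.rpow_pos_of_pos (by norm_num) _
  have hlog := Real.logb_le_logb_of_le (by norm_num : (1:ℝ) < 2) hfpos hfid
  rw [Real.logb_rpow (by norm_num : (0:ℝ) < 2) (by norm_num : (2:ℝ) ≠ 1)] at hlog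
  linarith
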